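/- Let ρ₀, ρ₁ be commuting density matrices of the same finite dimension, let p ∈ [0,1], and set ρ = p·ρ₀ + (1-p)·ρ₁. Then p·B(ρ₀,ρ) + (1-p)·B(ρ₁,ρ) ≤ √(p² + (1-p)² + 2p(1-p)·B(ρ₀,ρ₁)), where B(σ,τ) = Tr|√σ·√τ| is the fidelity. -/

import Mathlib

open scoped ComplexOrder

/-- The square root of a positive semidefinite matrix, as in the older Mathlib. -/
noncomputable def Matrix.PosSemidef.sqrt {n : Type*} [Fintype n] [DecidableEq n] {𝕜 : Type*} [RCLike 𝕜]
    {A : Matrix n n 𝕜} (hA : A.PosSemidef) : Matrix n n 𝕜 :=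
  hA.1.eigenvectorUnitary.1 * Matrix.diagonal ((↑) ∘ (√·) ∘ hA.1.eigenvalues) *
    (star hA.1.eigenvectorUnitary : Matrix n n 𝕜)

/-- The trace norm of a complex matrix: `Tr √(Mᴴ M)`. -/
noncomputable def traceNorm {n : ℕ} (M : Matrix (Fin n) (Fin n) ℂ) : ℝ :=
  ((Matrix.posSemidef_conjTranspose_mul_self M).sqrt.trace).re

open scoped MatrixOrder in
lemma Matrix.PosSemidef.sqrt_eq_cfc' {n : ℕ} {A : Matrix (Fin n) (Fin n) ℂ} (hA : A.PosSemidef) :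
    hA.sqrt = CFC.sqrt A := by
  rw [CFC.sqrt_eq_cfc, cfc_nnreal_eq_real _ A, hA.1.cfc_eq]
  simp only [Matrix.IsHermitian.cfc, Unitary.conjStarAlgAut_apply, Matrix.PosSemidef.sqrt,
    Unitary.coe_star]
  congr 3
  funext i
  simp [Real.coe_sqrt, Real.coe_toNNReal', max_eq_left (hA.eigenvalues_nonneg i)]

open scoped MatrixOrder in
lemma Matrix.PosSemidef.posSemidef_sqrt {n : ℕ} {A : Matrix (Fin n) (Fin n) ℂ}
    (hA : A.PosSemidef) : hA.sqrt.PosSemidef := by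
  rw [hA.sqrt_eq_cfc']
  exact Matrix.nonneg_iff_posSemidef.mp (CFC.sqrt_nonneg A)

open scoped MatrixOrder in
lemma Matrix.PosSemidef.sqrt_mul_self {n : ℕ} {A : Matrix (Fin n) (Fin n) ℂ}
    (hA : A.PosSemidef) : hA.sqrt * hA.sqrt = A := by
  rw [hA.sqrt_eq_cfc']
  exact CFC.sqrt_mul_sqrt_self A (Matrix.nonneg_iff_posSemidef.mpr hA)

open scoped MatrixOrder in
lemma Matrix.PosSemidef.eq_sqrt_of_sq_eq {n : ℕ} {A : Matrix (Fin n) (Fin n) ℂ}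
    (hA : A.PosSemidef) {B : Matrix (Fin n) (Fin n) ℂ} (hB : B.PosSemidef) (h : A ^ 2 = B) :
    A = hB.sqrt := by
  subst h
  rw [hB.sqrt_eq_cfc', CFC.sqrt_sq A (Matrix.nonneg_iff_posSemidef.mpr hA)]

open Matrix

lemma sqrt_commute {n : ℕ} {A B : Matrix (Fin n) (Fin n) ℂ} (hA : A.PosSemidef)
    (h : A * B = B * A) : hA.sqrt * B = B * hA.sqrt := by
  set U : Matrix (Fin n) (Fin n) ℂ := (hA.1.eigenvectorUnitary : Matrix (Fin n) (Fin n) ℂ) with hUdef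
  have hU1 : star U * U = 1 := Matrix.UnitaryGroup.star_mul_self _
  have hU2 : U * star U = 1 := Matrix.mem_unitaryGroup_iff.mp (hA.1.eigenvectorUnitary).2
  set d : Fin n → ℝ := hA.1.eigenvalues with hddef
  set C : Matrix (Fin n) (Fin n) ℂ := star U * B * U with hCdef
  have hB : B = U * C * star U := by
    rw [hCdef]
    calc B = (U * star U) * B * (U * star U) := by rw [hU2]; simp
    _ = U * (star U * B * U) * star U := by simp only [Matrix.mul_assoc]
  have hDC : diagonal (Complex.ofReal ∘ d) * C = C * diagonal (Complex.ofReal ∘ d) := by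
    have h' := h
    rw [hA.1.spectral_theorem, Unitary.conjStarAlgAut_apply, ← hUdef, ← hddef] at h'
    have := congrArg (fun M => star U * M * U) h'
    simp only [Matrix.mul_assoc] at this
    rw [hU1] at this
    simp only [Matrix.mul_one] at this
    calc diagonal (Complex.ofReal ∘ d) * C
        = diagonal (Complex.ofReal ∘ d) * (star U * B * U) := by rw [hCdef]
      _ = star U * (U * (diagonal (RCLike.ofReal ∘ d) * (star U * (B * U)))) := by
          simp only [← Matrix.mul_assoc, hU1, Matrix.one_mul]; rfl
      _ = star U * (B * (U * (diagonal (RCLike.ofReal ∘ d) * (star U * U)))) := by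
          rw [hU1, Matrix.mul_one]; exact this
      _ = C * diagonal (Complex.ofReal ∘ d) := by
          rw [hU1, Matrix.mul_one, hCdef]; simp only [Matrix.mul_assoc]; rfl
  have key : ∀ i j, C i j * (d i : ℂ) = C i j * (d j : ℂ) := by
    intro i j
    have := congrFun (congrFun hDC i) j
    rw [Matrix.diagonal_mul, Matrix.mul_diagonal] at this
    simpa [mul_comm] using this
  have hD'C : diagonal (Complex.ofReal ∘ Real.sqrt ∘ d) * C
      = C * diagonal (Complex.ofReal ∘ Real.sqrt ∘ d) := by
    ext i j
    rw [Matrix.diagonal_mul, Matrix.mul_diagonal]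
    rcases eq_or_ne (C i j) 0 with hc | hc
    · simp [hc]
    · have : (d i : ℂ) = (d j : ℂ) := mul_left_cancel₀ hc (key i j)
      have hdij : d i = d j := by exact_mod_cast this
      rw [mul_comm]
      simp [Function.comp, hdij]
  have hs : hA.sqrt = U * diagonal (Complex.ofReal ∘ Real.sqrt ∘ d) * star U := rfl
  rw [hs]
  conv_lhs => rw [hB]
  conv_rhs => rw [hB]
  calc U * diagonal (Complex.ofReal ∘ Real.sqrt ∘ d) * star U * (U * C * star U)
      = U * (diagonal (Complex.ofReal ∘ Real.sqrt ∘ d) * ((star U * U) * C)) * star U := by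
        simp only [Matrix.mul_assoc]
    _ = U * (C * diagonal (Complex.ofReal ∘ Real.sqrt ∘ d)) * star U := by
        rw [hU1, Matrix.one_mul, hD'C]
    _ = U * C * star U * (U * diagonal (Complex.ofReal ∘ Real.sqrt ∘ d) * star U) := by
        simp only [Matrix.mul_assoc]
        rw [← Matrix.mul_assoc (star U) U, hU1, Matrix.one_mul]

lemma psd_mul_of_commute {n : ℕ} {P Q : Matrix (Fin n) (Fin n) ℂ} (hP : P.PosSemidef)
    (hQ : Q.PosSemidef) (h : P * Q = Q * P) : (P * Q).PosSemidef := by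
  have hs : hP.sqrt * Q = Q * hP.sqrt := sqrt_commute hP h
  have : P * Q = hP.sqrt * Q * hP.sqrtᴴ := by
    rw [hP.posSemidef_sqrt.1]
    conv_lhs => rw [← hP.sqrt_mul_self, Matrix.mul_assoc, hs, ← Matrix.mul_assoc]
  rw [this]
  exact hQ.mul_mul_conjTranspose_same _

lemma traceNorm_of_psd {n : ℕ} {M : Matrix (Fin n) (Fin n) ℂ} (hM : M.PosSemidef) :
    traceNorm M = M.trace.re := by
  have : (Matrix.posSemidef_conjTranspose_mul_self M).sqrt = M := by
    refine (hM.eq_sqrt_of_sq_eq _ ?_).symm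
    rw [pow_two, hM.1]
  rw [traceNorm, this]

noncomputable def vecM {n : ℕ} (M : Matrix (Fin n) (Fin n) ℂ) :
    EuclideanSpace ℂ (Fin n × Fin n) := WithLp.toLp 2 (fun q : Fin n × Fin n => M q.1 q.2)

lemma inner_vecM {n : ℕ} (M N : Matrix (Fin n) (Fin n) ℂ) (hM : M.IsHermitian) :
    (inner ℂ (vecM M) (vecM N) : ℂ) = (M * N).trace := by
  simp only [PiLp.inner_apply, RCLike.inner_apply, vecM, PiLp.toLp_apply, Matrix.trace, Matrix.diag,
    Matrix.mul_apply, Fintype.sum_prod_type]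
  rw [Finset.sum_comm]
  congr 1 with j
  congr 1 with i
  rw [← hM.apply i j]
  simp [Matrix.conjTranspose_apply, mul_comm]

lemma cs_trace {n : ℕ} (M N : Matrix (Fin n) (Fin n) ℂ) (hM : M.IsHermitian)
    (hN : N.IsHermitian) :
    ((M * N).trace).re ≤ Real.sqrt ((M * M).trace.re) * Real.sqrt ((N * N).trace.re) := by
  have h1 : ((M * N).trace).re = (inner ℂ (vecM M) (vecM N) : ℂ).re := by rw [inner_vecM _ _ hM]
  have h2 : ‖vecM M‖ = Real.sqrt ((M * M).trace.re) := by
    rw [← inner_vecM _ _ hM]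
    rw [show ((inner ℂ (vecM M) (vecM M) : ℂ)).re = RCLike.re (inner ℂ (vecM M) (vecM M) : ℂ) from rfl,
      inner_self_eq_norm_sq, Real.sqrt_sq (norm_nonneg _)]
  have h3 : ‖vecM N‖ = Real.sqrt ((N * N).trace.re) := by
    rw [← inner_vecM _ _ hN]
    rw [show ((inner ℂ (vecM N) (vecM N) : ℂ)).re = RCLike.re (inner ℂ (vecM N) (vecM N) : ℂ) from rfl,
      inner_self_eq_norm_sq, Real.sqrt_sq (norm_nonneg _)]
  rw [h1, ← h2, ← h3]
  exact le_trans (RCLike.re_le_norm (K := ℂ) _) (norm_inner_le_norm _ _)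

theorem fidelity_avg_bound_commuting {n : ℕ} (ρ0 ρ1 : Matrix (Fin n) (Fin n) ℂ)
    (h0 : ρ0.PosSemidef) (h1 : ρ1.PosSemidef)
    (h0t : ρ0.trace = 1) (h1t : ρ1.trace = 1)
    (hcomm : ρ0 * ρ1 = ρ1 * ρ0)
    (p : ℝ) (hp : p ∈ Set.Icc (0:ℝ) 1)
    (hρ : ((p : ℂ) • ρ0 + ((1 - p : ℝ) : ℂ) • ρ1).PosSemidef) :
    p * traceNorm (h0.sqrt * hρ.sqrt) + (1 - p) * traceNorm (h1.sqrt * hρ.sqrt) ≤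
      Real.sqrt (p^2 + (1-p)^2 + 2*p*(1-p) * traceNorm (h0.sqrt * h1.sqrt)) := by
  obtain ⟨hp0, hp1⟩ := hp
  set ρ : Matrix (Fin n) (Fin n) ℂ := (p : ℂ) • ρ0 + ((1 - p : ℝ) : ℂ) • ρ1 with hρdef
  -- commutation facts
  have hc01 : h0.sqrt * ρ1 = ρ1 * h0.sqrt := sqrt_commute h0 hcomm
  have hS01 : h1.sqrt * h0.sqrt = h0.sqrt * h1.sqrt := sqrt_commute h1 hc01.symm
  have hρ0ρ : ρ0 * ρ = ρ * ρ0 := by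
    rw [hρdef]
    simp only [Matrix.mul_add, Matrix.add_mul, Matrix.mul_smul, Matrix.smul_mul, hcomm]
  have hρ1ρ : ρ1 * ρ = ρ * ρ1 := by
    rw [hρdef]
    simp only [Matrix.mul_add, Matrix.add_mul, Matrix.mul_smul, Matrix.smul_mul, hcomm]
  have hS0ρ : h0.sqrt * ρ = ρ * h0.sqrt := sqrt_commute h0 hρ0ρ
  have hS1ρ : h1.sqrt * ρ = ρ * h1.sqrt := sqrt_commute h1 hρ1ρ
  have hS0S : hρ.sqrt * h0.sqrt = h0.sqrt * hρ.sqrt := sqrt_commute hρ hS0ρ.symm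
  have hS1S : hρ.sqrt * h1.sqrt = h1.sqrt * hρ.sqrt := sqrt_commute hρ hS1ρ.symm
  -- positive semidefiniteness of products
  have hP0 : (h0.sqrt * hρ.sqrt).PosSemidef :=
    psd_mul_of_commute h0.posSemidef_sqrt hρ.posSemidef_sqrt hS0S.symm
  have hP1 : (h1.sqrt * hρ.sqrt).PosSemidef :=
    psd_mul_of_commute h1.posSemidef_sqrt hρ.posSemidef_sqrt hS1S.symm
  have hP01 : (h0.sqrt * h1.sqrt).PosSemidef :=
    psd_mul_of_commute h0.posSemidef_sqrt h1.posSemidef_sqrt hS01.symm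
  rw [traceNorm_of_psd hP0, traceNorm_of_psd hP1, traceNorm_of_psd hP01]
  -- the averaged square root
  set A : Matrix (Fin n) (Fin n) ℂ := (p : ℂ) • h0.sqrt + ((1 - p : ℝ) : ℂ) • h1.sqrt with hAdef
  have hAH : A.IsHermitian := by
    rw [hAdef, Matrix.IsHermitian, Matrix.conjTranspose_add, Matrix.conjTranspose_smul,
      Matrix.conjTranspose_smul, h0.posSemidef_sqrt.1, h1.posSemidef_sqrt.1,
      Complex.star_def, Complex.conj_ofReal, Complex.conj_ofReal]
  have hSH : hρ.sqrt.IsHermitian := hρ.posSemidef_sqrt.1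
  have key := cs_trace A hρ.sqrt hAH hSH
  have hT1 : (A * hρ.sqrt).trace
      = (p:ℂ) * (h0.sqrt * hρ.sqrt).trace + ((1-p:ℝ):ℂ) * (h1.sqrt * hρ.sqrt).trace := by
    rw [hAdef, Matrix.add_mul, Matrix.smul_mul, Matrix.smul_mul, Matrix.trace_add,
      Matrix.trace_smul, Matrix.trace_smul, smul_eq_mul, smul_eq_mul]
  have hT3 : (hρ.sqrt * hρ.sqrt).trace = 1 := by
    rw [hρ.sqrt_mul_self, Matrix.trace_add, Matrix.trace_smul, Matrix.trace_smul, h0t, h1t,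
      smul_eq_mul, smul_eq_mul, mul_one, mul_one]
    push_cast
    ring
  have hT01 : (h0.sqrt * h0.sqrt).trace = 1 := by rw [h0.sqrt_mul_self, h0t]
  have hT11 : (h1.sqrt * h1.sqrt).trace = 1 := by rw [h1.sqrt_mul_self, h1t]
  have hT2 : (A * A).trace
      = ((p^2+(1-p)^2 : ℝ):ℂ) + ((2*p*(1-p):ℝ):ℂ) * (h0.sqrt * h1.sqrt).trace := by
    rw [hAdef]
    simp only [Matrix.add_mul, Matrix.mul_add, smul_mul_assoc, mul_smul_comm,
      Matrix.trace_add, Matrix.trace_smul, smul_eq_mul, hS01, hT01, hT11]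
    push_cast
    ring
  have e1 : p * ((h0.sqrt * hρ.sqrt).trace).re + (1-p) * ((h1.sqrt * hρ.sqrt).trace).re
      = ((A * hρ.sqrt).trace).re := by
    rw [hT1]
    simp [Complex.add_re, Complex.mul_re]
  have e2 : ((A * A).trace).re = p^2+(1-p)^2+2*p*(1-p)*((h0.sqrt * h1.sqrt).trace).re := by
    rw [hT2]
    simp only [Complex.add_re, Complex.mul_re, Complex.ofReal_re, Complex.ofReal_im]
    ring
  have e3 : ((hρ.sqrt * hρ.sqrt).trace).re = 1 := by rw [hT3]; simp
  rw [e1, ← e2]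
  calc ((A * hρ.sqrt).trace).re
      ≤ Real.sqrt ((A * A).trace.re) * Real.sqrt ((hρ.sqrt * hρ.sqrt).trace.re) := key
    _ = Real.sqrt ((A * A).trace.re) := by rw [e3, Real.sqrt_one, mul_one]
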